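/- arXiv:2602.06840 — 5 statements merged into one kernel-verified Lean document; each statement's English description precedes it below -/
import Mathlib

section
/- Let θ_i, θ_r ∈ [0, π/2) with θ_i ≠ θ_r, k > 0, η0 > 0, and set Ψ(y) = exp(−i k(sin θ_r − sin θ_i) y) and Z2(y) = η0(1 + Ψ(y))/(cos θ_i − Ψ(y) cos θ_r). Then for every y ∈ ℝ: (i) cos θ_i − Ψ(y) cos θ_r ≠ 0, so Z2(y) is well defined; and (ii) the fields E(y) = A0 exp(−i k sin θ_i · y)(1 + Ψ(y)) and H(y) = (A0/η0) exp(−i k sin θ_i · y)(−cos θ_i + cos θ_r Ψ(y)) satisfy the impedance boundary condition E(y) = −Z2(y)·H(y), for any A0 ∈ ℂ. That is, the geometric-optics impedance exactly supports anomalous reflection of the incident plane wave into a single reflected plane wave of unit amplitude towards θ_r. -/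
open Real

/-- The geometric-optics impedance Z2 is well defined and exactly
supports anomalous reflection of the incident plane wave into a single
reflected plane wave of unit amplitude towards θ_r. -/
theorem stmt_14 (θi θr k η0 : ℝ)
    (hθi : θi ∈ Set.Ico 0 (π / 2)) (hθr : θr ∈ Set.Ico 0 (π / 2))
    (hne : θi ≠ θr) (hk : 0 < k) (hη0 : 0 < η0)
    (Ψ : ℝ → ℂ)
    (hΨ : ∀ y : ℝ, Ψ y = Complex.exp (-Complex.I * ((k * (Real.sin θr - Real.sin θi) * y : ℝ) : ℂ)))
    (Z2 : ℝ → ℂ)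
    (hZ2 : ∀ y : ℝ, Z2 y = (η0 : ℂ) * (1 + Ψ y) /
      (((Real.cos θi : ℝ) : ℂ) - Ψ y * ((Real.cos θr : ℝ) : ℂ))) :
    ∀ y : ℝ,
      (((Real.cos θi : ℝ) : ℂ) - Ψ y * ((Real.cos θr : ℝ) : ℂ) ≠ 0) ∧
      (∀ A0 : ℂ,
        A0 * Complex.exp (-Complex.I * ((k * Real.sin θi * y : ℝ) : ℂ)) * (1 + Ψ y)
          = -Z2 y * ((A0 / (η0 : ℂ)) * Complex.exp (-Complex.I * ((k * Real.sin θi * y : ℝ) : ℂ)) *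
            (-((Real.cos θi : ℝ) : ℂ) + ((Real.cos θr : ℝ) : ℂ) * Ψ y))) := by
  intro y
  obtain ⟨hi0, hi2⟩ := hθi
  obtain ⟨hr0, hr2⟩ := hθr
  have hci : 0 < Real.cos θi := Real.cos_pos_of_mem_Ioo ⟨by linarith [Real.pi_pos], hi2⟩
  have hcr : 0 < Real.cos θr := Real.cos_pos_of_mem_Ioo ⟨by linarith [Real.pi_pos], hr2⟩
  have habs : ‖Ψ y‖ = 1 := by
    rw [hΨ y, Complex.norm_exp]
    simp
  have hD : ((Real.cos θi : ℝ) : ℂ) - Ψ y * ((Real.cos θr : ℝ) : ℂ) ≠ 0 := by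
    intro h
    have heq : ((Real.cos θi : ℝ) : ℂ) = Ψ y * ((Real.cos θr : ℝ) : ℂ) := by
      linear_combination h
    have : Real.cos θi = Real.cos θr := by
      have h2 := congrArg (‖·‖) heq
      rw [norm_mul, habs, one_mul, Complex.norm_real, Complex.norm_real, Real.norm_eq_abs, Real.norm_eq_abs,
        abs_of_pos hci, abs_of_pos hcr] at h2
      exact h2
    exact hne (Real.injOn_cos ⟨hi0, by linarith [Real.pi_pos]⟩
      ⟨hr0, by linarith [Real.pi_pos]⟩ this)
  refine ⟨hD, fun A0 => ?_⟩
  rw [hZ2 y]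
  have hη : (η0 : ℂ) ≠ 0 := Complex.ofReal_ne_zero.mpr hη0.ne'
  set ci : ℂ := ((Real.cos θi : ℝ) : ℂ)
  set cr : ℂ := ((Real.cos θr : ℝ) : ℂ)
  set e : ℂ := Complex.exp (-Complex.I * ((k * Real.sin θi * y : ℝ) : ℂ))
  set P : ℂ := Ψ y
  field_simp
  ring
end

section
/- Let θ_i, θ_r ∈ [0, π/2) with θ_i ≠ θ_r, k > 0, η0 > 0, and set Ψ(y) = exp(−i k(sin θ_r − sin θ_i) y) and Z2(y) = η0(1 + Ψ(y))/(cos θ_i − Ψ(y) cos θ_r). Then for every y ∈ ℝ, Re(Z2(y)) = η0(cos θ_i − cos θ_r)(1 + cos(k(sin θ_r − sin θ_i) y)) / |cos θ_i − Ψ(y) cos θ_r|². In particular, if θ_i < θ_r then Re(Z2(y)) ≥ 0 for all y, i.e., the GO impedance profile is lossy (introduces power losses). -/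
open Real

/-- Real part of the GO impedance Z2, and its nonnegativity
(lossiness) when θ_i < θ_r. -/
theorem stmt_15 (θi θr k η0 : ℝ)
    (hθi : θi ∈ Set.Ico 0 (π / 2)) (hθr : θr ∈ Set.Ico 0 (π / 2))
    (hne : θi ≠ θr) (hk : 0 < k) (hη0 : 0 < η0)
    (Ψ : ℝ → ℂ)
    (hΨ : ∀ y : ℝ, Ψ y = Complex.exp (-Complex.I * ((k * (Real.sin θr - Real.sin θi) * y : ℝ) : ℂ)))
    (Z2 : ℝ → ℂ)
    (hZ2 : ∀ y : ℝ, Z2 y = (η0 : ℂ) * (1 + Ψ y) /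
      (((Real.cos θi : ℝ) : ℂ) - Ψ y * ((Real.cos θr : ℝ) : ℂ))) :
    (∀ y : ℝ, (Z2 y).re =
      η0 * (Real.cos θi - Real.cos θr) * (1 + Real.cos (k * (Real.sin θr - Real.sin θi) * y)) /
        (‖((Real.cos θi : ℝ) : ℂ) - Ψ y * ((Real.cos θr : ℝ) : ℂ)‖) ^ 2) ∧
    (θi < θr → ∀ y : ℝ, 0 ≤ (Z2 y).re) := by
  have key : ∀ y : ℝ, (Z2 y).re =
      η0 * (Real.cos θi - Real.cos θr) * (1 + Real.cos (k * (Real.sin θr - Real.sin θi) * y)) /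
        (‖((Real.cos θi : ℝ) : ℂ) - Ψ y * ((Real.cos θr : ℝ) : ℂ)‖) ^ 2 := by
    intro y
    set t : ℝ := k * (Real.sin θr - Real.sin θi) * y with ht
    have hΨy : Ψ y = ((Real.cos t : ℝ) : ℂ) - ((Real.sin t : ℝ) : ℂ) * Complex.I := by
      rw [hΨ y, show -Complex.I * ((t : ℝ) : ℂ) = ((-t : ℝ) : ℂ) * Complex.I by push_cast; ring,
        Complex.exp_mul_I, ← Complex.ofReal_cos, ← Complex.ofReal_sin]
      push_cast
      simp [Real.cos_neg, Real.sin_neg]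
      ring
    rw [hZ2 y, hΨy, Complex.sq_norm]
    set a := Real.cos θi
    set b := Real.cos θr
    set c := Real.cos t
    set s := Real.sin t
    have hden : ((a : ℝ) : ℂ) - (((c : ℝ) : ℂ) - ((s : ℝ) : ℂ) * Complex.I) * ((b : ℝ) : ℂ)
        = Complex.mk (a - c * b) (s * b) := by
      apply Complex.ext <;> simp <;> ring
    rw [hden]
    have hnum : (η0 : ℂ) * (1 + (((c : ℝ) : ℂ) - ((s : ℝ) : ℂ) * Complex.I))
        = Complex.mk (η0 * (1 + c)) (-(η0 * s)) := by
      apply Complex.ext <;> simp <;> ring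
    rw [hnum]
    have hsc : s ^ 2 + c ^ 2 = 1 := Real.sin_sq_add_cos_sq t
    rw [Complex.div_re]
    simp only [Complex.normSq_mk]
    by_cases h : (a - c * b) * (a - c * b) + (s * b) * (s * b) = 0
    · rw [h]; simp
    · field_simp
      linear_combination (-(Real.cos θr * ((a - c * b) * (a - c * b) + (s * b) * (s * b))⁻¹)) * hsc
  refine ⟨key, fun hlt y => ?_⟩
  rw [key y]
  apply div_nonneg _ (sq_nonneg _)
  have hcos : Real.cos θr < Real.cos θi := by
    apply Real.cos_lt_cos_of_nonneg_of_le_pi hθi.1 _ hlt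
    linarith [hθr.2, Real.pi_pos]
  have h1 : 0 ≤ 1 + Real.cos (k * (Real.sin θr - Real.sin θi) * y) := by
    linarith [Real.neg_one_le_cos (k * (Real.sin θr - Real.sin θi) * y)]
  exact mul_nonneg (mul_nonneg hη0.le (by linarith)) h1
end

section
/- Let θ_i, θ_r ∈ [0, π/2) with θ_i ≠ θ_r, k > 0, η0 > 0, set Ψ(y) = exp(−i k(sin θ_r − sin θ_i) y), R = √(cos θ_i/cos θ_r), and Z3(y) = (η0/√(cos θ_i cos θ_r))·(√(cos θ_r) + √(cos θ_i) Ψ(y))/(√(cos θ_i) − √(cos θ_r) Ψ(y)). Then for every y ∈ ℝ: (i) √(cos θ_i) − √(cos θ_r) Ψ(y) ≠ 0, so Z3(y) is well defined; (ii) R² cos θ_r = cos θ_i (power-flux conservation); and (iii) the fields E(y) = A0 exp(−i k sin θ_i · y)(1 + R·Ψ(y)) and H(y) = (A0/η0) exp(−i k sin θ_i · y)(−cos θ_i + cos θ_r R Ψ(y)) satisfy E(y) = −Z3(y)·H(y), for any A0 ∈ ℂ. That is, the globally-optimal impedance exactly supports power-conserving anomalous reflection towards θ_r. -/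
open Real

/-- The globally-optimal impedance Z3 is well defined, its
reflection coefficient R conserves the normal power flux, and it exactly
supports power-conserving anomalous reflection towards θ_r. -/
theorem stmt_16 (θi θr k η0 : ℝ)
    (hθi : θi ∈ Set.Ico 0 (π / 2)) (hθr : θr ∈ Set.Ico 0 (π / 2))
    (hne : θi ≠ θr) (hk : 0 < k) (hη0 : 0 < η0)
    (Ψ : ℝ → ℂ)
    (hΨ : ∀ y : ℝ, Ψ y = Complex.exp (-Complex.I * ((k * (Real.sin θr - Real.sin θi) * y : ℝ) : ℂ)))
    (R : ℝ) (hR : R = Real.sqrt (Real.cos θi / Real.cos θr))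
    (Z3 : ℝ → ℂ)
    (hZ3 : ∀ y : ℝ, Z3 y =
      ((η0 / Real.sqrt (Real.cos θi * Real.cos θr) : ℝ) : ℂ) *
        (((Real.sqrt (Real.cos θr) : ℝ) : ℂ) + ((Real.sqrt (Real.cos θi) : ℝ) : ℂ) * Ψ y) /
        (((Real.sqrt (Real.cos θi) : ℝ) : ℂ) - ((Real.sqrt (Real.cos θr) : ℝ) : ℂ) * Ψ y)) :
    ∀ y : ℝ,
      (((Real.sqrt (Real.cos θi) : ℝ) : ℂ) - ((Real.sqrt (Real.cos θr) : ℝ) : ℂ) * Ψ y ≠ 0) ∧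
      (R ^ 2 * Real.cos θr = Real.cos θi) ∧
      (∀ A0 : ℂ,
        A0 * Complex.exp (-Complex.I * ((k * Real.sin θi * y : ℝ) : ℂ)) * (1 + (R : ℂ) * Ψ y)
          = -Z3 y * ((A0 / (η0 : ℂ)) * Complex.exp (-Complex.I * ((k * Real.sin θi * y : ℝ) : ℂ)) *
            (-((Real.cos θi : ℝ) : ℂ) + ((Real.cos θr : ℝ) : ℂ) * (R : ℂ) * Ψ y))) := by
  intro y
  obtain ⟨hi0, hi2⟩ := hθi
  obtain ⟨hr0, hr2⟩ := hθr
  have hci : 0 < Real.cos θi := Real.cos_pos_of_mem_Ioo ⟨by linarith [Real.pi_pos], hi2⟩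
  have hcr : 0 < Real.cos θr := Real.cos_pos_of_mem_Ioo ⟨by linarith [Real.pi_pos], hr2⟩
  have hcine : Real.cos θi ≠ Real.cos θr := by
    intro h
    exact hne (Real.injOn_cos ⟨hi0, by linarith [Real.pi_pos]⟩ ⟨hr0, by linarith [Real.pi_pos]⟩ h)
  set a := Real.sqrt (Real.cos θi) with ha
  set b := Real.sqrt (Real.cos θr) with hb
  have ha0 : 0 < a := Real.sqrt_pos.2 hci
  have hb0 : 0 < b := Real.sqrt_pos.2 hcr
  have ha2 : a ^ 2 = Real.cos θi := Real.sq_sqrt hci.le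
  have hb2 : b ^ 2 = Real.cos θr := Real.sq_sqrt hcr.le
  have hab : a ≠ b := by
    intro h
    apply hcine
    rw [← ha2, ← hb2, h]
  have habs : ‖Ψ y‖ = 1 := by
    rw [hΨ y]
    rw [Complex.norm_exp]
    simp
  have hden : (a : ℂ) - (b : ℂ) * Ψ y ≠ 0 := by
    intro h
    have h1 : (a : ℂ) = (b : ℂ) * Ψ y := by linear_combination h
    have h2 : ‖(a : ℂ)‖ = ‖(b : ℂ) * Ψ y‖ := by rw [h1]
    rw [norm_mul, habs, Complex.norm_real, Real.norm_eq_abs, Complex.norm_real, Real.norm_eq_abs,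
      abs_of_pos ha0, abs_of_pos hb0, mul_one] at h2
    exact hab h2
  have hRab : R = a / b := by
    rw [hR, Real.sqrt_div hci.le, ha, hb]
  have hRsq : R ^ 2 * Real.cos θr = Real.cos θi := by
    rw [hRab, div_pow, ha2, hb2]
    field_simp
  refine ⟨hden, hRsq, ?_⟩
  intro A0
  rw [hZ3 y]
  set P := Ψ y with hP
  set E := Complex.exp (-Complex.I * ((k * Real.sin θi * y : ℝ) : ℂ)) with hE
  have hsq : Real.sqrt (Real.cos θi * Real.cos θr) = a * b := Real.sqrt_mul hci.le _
  rw [hsq, hRab]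
  have haC : ((a : ℂ)) ≠ 0 := by exact_mod_cast ha0.ne'
  have hbC : ((b : ℂ)) ≠ 0 := by exact_mod_cast hb0.ne'
  have hηC : ((η0 : ℂ)) ≠ 0 := by exact_mod_cast hη0.ne'
  have hciC : ((Real.cos θi : ℝ) : ℂ) = (a : ℂ) ^ 2 := by exact_mod_cast ha2.symm
  have hcrC : ((Real.cos θr : ℝ) : ℂ) = (b : ℂ) ^ 2 := by exact_mod_cast hb2.symm
  rw [hciC, hcrC]
  push_cast
  field_simp
  ring
end

section
/- Let θ_i, θ_r ∈ [0, π/2) with θ_i ≠ θ_r, k > 0, η0 > 0, set φ(y) = k(sin θ_r − sin θ_i) y, Ψ(y) = exp(−i φ(y)), and Z3(y) = (η0/√(cos θ_i cos θ_r))·(√(cos θ_r) + √(cos θ_i) Ψ(y))/(√(cos θ_i) − √(cos θ_r) Ψ(y)). Then for every y ∈ ℝ, |√(cos θ_i) − √(cos θ_r) Ψ(y)|² = cos θ_i + cos θ_r − 2√(cos θ_i cos θ_r) cos φ(y) > 0 and Re(Z3(y)) = η0(cos θ_i − cos θ_r) cos φ(y) / (√(cos θ_i cos θ_r)·(cos θ_i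 + cos θ_r − 2√(cos θ_i cos θ_r) cos φ(y))). -/
open Real

/-- Explicit formulas for the squared modulus of the denominator
of the globally-optimal impedance Z3 and for its real part. -/
theorem stmt_17 (θi θr k η0 : ℝ)
    (hθi : θi ∈ Set.Ico 0 (π / 2)) (hθr : θr ∈ Set.Ico 0 (π / 2))
    (hne : θi ≠ θr) (hk : 0 < k) (hη0 : 0 < η0)
    (φ : ℝ → ℝ) (hφ : ∀ y : ℝ, φ y = k * (Real.sin θr - Real.sin θi) * y)
    (Ψ : ℝ → ℂ) (hΨ : ∀ y : ℝ, Ψ y = Complex.exp (-Complex.I * ((φ y : ℝ) : ℂ)))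
    (Z3 : ℝ → ℂ)
    (hZ3 : ∀ y : ℝ, Z3 y =
      ((η0 / Real.sqrt (Real.cos θi * Real.cos θr) : ℝ) : ℂ) *
        (((Real.sqrt (Real.cos θr) : ℝ) : ℂ) + ((Real.sqrt (Real.cos θi) : ℝ) : ℂ) * Ψ y) /
        (((Real.sqrt (Real.cos θi) : ℝ) : ℂ) - ((Real.sqrt (Real.cos θr) : ℝ) : ℂ) * Ψ y)) :
    ∀ y : ℝ,
      ((‖(((Real.sqrt (Real.cos θi) : ℝ) : ℂ)
            - ((Real.sqrt (Real.cos θr) : ℝ) : ℂ) * Ψ y)‖) ^ 2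
          = Real.cos θi + Real.cos θr
            - 2 * Real.sqrt (Real.cos θi * Real.cos θr) * Real.cos (φ y)) ∧
      (0 < Real.cos θi + Real.cos θr
            - 2 * Real.sqrt (Real.cos θi * Real.cos θr) * Real.cos (φ y)) ∧
      ((Z3 y).re = η0 * (Real.cos θi - Real.cos θr) * Real.cos (φ y) /
        (Real.sqrt (Real.cos θi * Real.cos θr) *
          (Real.cos θi + Real.cos θr
            - 2 * Real.sqrt (Real.cos θi * Real.cos θr) * Real.cos (φ y)))) := by
  intro y
  obtain ⟨hi0, hi1⟩ := hθi
  obtain ⟨hr0, hr1⟩ := hθr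
  have hci : 0 < Real.cos θi := Real.cos_pos_of_mem_Ioo ⟨by linarith [Real.pi_pos], hi1⟩
  have hcr : 0 < Real.cos θr := Real.cos_pos_of_mem_Ioo ⟨by linarith [Real.pi_pos], hr1⟩
  set a := Real.sqrt (Real.cos θi) with hadef
  set b := Real.sqrt (Real.cos θr) with hbdef
  have ha : 0 < a := Real.sqrt_pos.mpr hci
  have hb : 0 < b := Real.sqrt_pos.mpr hcr
  have ha2 : a ^ 2 = Real.cos θi := Real.sq_sqrt hci.le
  have hb2 : b ^ 2 = Real.cos θr := Real.sq_sqrt hcr.le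
  have hab : Real.sqrt (Real.cos θi * Real.cos θr) = a * b := Real.sqrt_mul hci.le _
  have hane : a ≠ b := by
    intro h
    apply hne
    have hc : Real.cos θi = Real.cos θr := by rw [← ha2, ← hb2, h]
    exact Real.injOn_cos ⟨hi0, by linarith [Real.pi_pos]⟩ ⟨hr0, by linarith [Real.pi_pos]⟩ hc
  set c := Real.cos (φ y) with hcdef
  set s := Real.sin (φ y) with hsdef
  have hcs : s ^ 2 + c ^ 2 = 1 := Real.sin_sq_add_cos_sq _
  have hz : Ψ y = (c : ℂ) - (s : ℂ) * Complex.I := by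
    rw [hΨ, show -Complex.I * ((φ y : ℝ) : ℂ) = ((-(φ y) : ℝ) : ℂ) * Complex.I by push_cast; ring,
      Complex.exp_mul_I]
    push_cast
    rw [Complex.cos_neg, Complex.sin_neg, hcdef, hsdef, Complex.ofReal_cos,
      Complex.ofReal_sin]
    ring
  have key : Real.cos θi + Real.cos θr - 2 * Real.sqrt (Real.cos θi * Real.cos θr) * c
      = (a - b * c) ^ 2 + (b * s) ^ 2 := by
    rw [hab, ← ha2, ← hb2]; nlinarith [hcs]
  have h1 : (‖((a : ℂ) - (b : ℂ) * Ψ y)‖) ^ 2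
      = Real.cos θi + Real.cos θr - 2 * Real.sqrt (Real.cos θi * Real.cos θr) * c := by
    rw [Complex.sq_norm, hz, key, Complex.normSq_apply]
    simp
    ring
  have h2 : 0 < Real.cos θi + Real.cos θr - 2 * Real.sqrt (Real.cos θi * Real.cos θr) * c := by
    rw [hab, ← ha2, ← hb2]
    have hq : 0 < (a - b) ^ 2 := by
      have h := sub_ne_zero.mpr hane
      positivity
    nlinarith [Real.cos_le_one (φ y), mul_pos ha hb]
  refine ⟨h1, h2, ?_⟩
  rw [hZ3, hz]
  rw [Complex.div_re]
  have hns : Complex.normSq ((a : ℂ) - (b : ℂ) * ((c:ℂ) - (s:ℂ) * Complex.I))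
      = Real.cos θi + Real.cos θr - 2 * Real.sqrt (Real.cos θi * Real.cos θr) * c := by
    rw [key, Complex.normSq_apply]; simp; ring
  rw [hns]
  simp only [Complex.mul_re, Complex.mul_im, Complex.add_re, Complex.add_im, Complex.sub_re,
    Complex.sub_im, Complex.ofReal_re, Complex.ofReal_im, Complex.I_re, Complex.I_im]
  rw [hab, ← ha2, ← hb2]
  have hd : (a ^ 2 + b ^ 2 - 2 * (a * b) * c) ≠ 0 := by
    have := h2; rw [hab, ← ha2, ← hb2] at this; linarith
  field_simp
  linear_combination (-(η0*a*b)) * (a ^ 2 + b ^ 2 - 2 * (a * b) * c)⁻¹ * hcs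
end

section
/- Let θ_i, θ_r ∈ [0, π/2) with θ_i ≠ θ_r, k > 0, η0 > 0, let Ψ(y) = exp(−i k(sin θ_r − sin θ_i) y) and Z3(y) = (η0/√(cos θ_i cos θ_r))·(√(cos θ_r) + √(cos θ_i) Ψ(y))/(√(cos θ_i) − √(cos θ_r) Ψ(y)), and let D = (2π/k)/|sin θ_r − sin θ_i| be the RIS period. Then the globally-optimal impedance requires both local loss and local power amplification along the surface: there exist y₁, y₂ ∈ [0, D) with Re(Z3(y₁)) > 0 and Re(Z3(y₂)) < 0. -/
open Real

/-- The globally-optimal impedance Z3 requires both local loss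
and local power amplification within one period of the RIS. -/
theorem stmt_18 (θi θr k η0 : ℝ)
    (hθi : θi ∈ Set.Ico 0 (π / 2)) (hθr : θr ∈ Set.Ico 0 (π / 2))
    (hne : θi ≠ θr) (hk : 0 < k) (hη0 : 0 < η0)
    (Ψ : ℝ → ℂ)
    (hΨ : ∀ y : ℝ, Ψ y = Complex.exp (-Complex.I * ((k * (Real.sin θr - Real.sin θi) * y : ℝ) : ℂ)))
    (Z3 : ℝ → ℂ)
    (hZ3 : ∀ y : ℝ, Z3 y =
      ((η0 / Real.sqrt (Real.cos θi * Real.cos θr) : ℝ) : ℂ) *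
        (((Real.sqrt (Real.cos θr) : ℝ) : ℂ) + ((Real.sqrt (Real.cos θi) : ℝ) : ℂ) * Ψ y) /
        (((Real.sqrt (Real.cos θi) : ℝ) : ℂ) - ((Real.sqrt (Real.cos θr) : ℝ) : ℂ) * Ψ y))
    (D : ℝ) (hD : D = (2 * π / k) / |Real.sin θr - Real.sin θi|) :
    ∃ y₁ ∈ Set.Ico 0 D, ∃ y₂ ∈ Set.Ico 0 D,
      0 < (Z3 y₁).re ∧ (Z3 y₂).re < 0 := by
  obtain ⟨hi0, hi1⟩ := hθi
  obtain ⟨hr0, hr1⟩ := hθr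
  have hpi := Real.pi_pos
  have hci : 0 < Real.cos θi :=
    Real.cos_pos_of_mem_Ioo ⟨by linarith, hi1⟩
  have hcr : 0 < Real.cos θr :=
    Real.cos_pos_of_mem_Ioo ⟨by linarith, hr1⟩
  set si := Real.sqrt (Real.cos θi) with hsi_def
  set sr := Real.sqrt (Real.cos θr) with hsr_def
  have hsi : 0 < si := Real.sqrt_pos.2 hci
  have hsr : 0 < sr := Real.sqrt_pos.2 hcr
  -- sin θr ≠ sin θi
  have hsinne : Real.sin θr - Real.sin θi ≠ 0 := by
    intro h
    apply hne
    apply Real.injOn_sin ⟨by linarith, by linarith⟩ ⟨by linarith, by linarith⟩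
    linarith
  set s := Real.sin θr - Real.sin θi with hs_def
  have hsabs : 0 < |s| := abs_pos.2 hsinne
  have hDpos : 0 < D := by
    rw [hD]
    positivity
  -- si ≠ sr
  have hsirne : si ≠ sr := by
    intro h
    apply hne
    apply Real.injOn_cos ⟨hi0, by linarith⟩ ⟨hr0, by linarith⟩
    have := congrArg (fun x => x ^ 2) h
    simpa [hsi_def, hsr_def, Real.sq_sqrt hci.le, Real.sq_sqrt hcr.le] using this
  set c := η0 / Real.sqrt (Real.cos θi * Real.cos θr) with hc_def
  have hcpos : 0 < c := by
    rw [hc_def]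
    have : 0 < Real.cos θi * Real.cos θr := mul_pos hci hcr
    positivity
  -- Ψ 0 = 1
  have hΨ0 : Ψ 0 = 1 := by
    rw [hΨ 0]
    norm_num
  -- Ψ (D/2) = -1
  have harg : Complex.exp (-Complex.I * ((k * s * (D / 2) : ℝ) : ℂ)) = -1 := by
    rcases lt_or_gt_of_ne hsinne with h | h
    · have habs : |s| = -s := abs_of_neg h
      have : k * s * (D / 2) = -π := by
        rw [hD, habs]
        field_simp
      rw [this]
      push_cast
      rw [show -Complex.I * (-(π : ℂ)) = (π : ℂ) * Complex.I by ring]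
      exact Complex.exp_pi_mul_I
    · have habs : |s| = s := abs_of_pos h
      have : k * s * (D / 2) = π := by
        rw [hD, habs]
        field_simp
      rw [this]
      rw [show -Complex.I * (π : ℂ) = -((π : ℂ) * Complex.I) by ring]
      rw [Complex.exp_neg, Complex.exp_pi_mul_I]
      norm_num
  have hΨhalf : Ψ (D / 2) = -1 := by
    rw [hΨ (D / 2)]
    exact_mod_cast harg
  -- values
  have hZ0 : (Z3 0).re = c * (sr + si) / (si - sr) := by
    have : Z3 0 = ((c * (sr + si) / (si - sr) : ℝ) : ℂ) := by
      rw [hZ3 0, hΨ0]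
      push_cast
      ring
    rw [this, Complex.ofReal_re]
  have hZh : (Z3 (D / 2)).re = c * (sr - si) / (si + sr) := by
    have : Z3 (D / 2) = ((c * (sr - si) / (si + sr) : ℝ) : ℂ) := by
      rw [hZ3 (D / 2), hΨhalf]
      push_cast
      ring
    rw [this, Complex.ofReal_re]
  have h0mem : (0 : ℝ) ∈ Set.Ico 0 D := ⟨le_refl 0, hDpos⟩
  have hhmem : D / 2 ∈ Set.Ico 0 D := ⟨by linarith, by linarith⟩
  rcases lt_or_gt_of_ne hsirne with h | h
  · -- si < sr : Z3 0 negative, Z3 (D/2) positive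
    refine ⟨D / 2, hhmem, 0, h0mem, ?_, ?_⟩
    · rw [hZh]
      apply div_pos (mul_pos hcpos (by linarith)) (by linarith)
    · rw [hZ0]
      exact div_neg_of_pos_of_neg (mul_pos hcpos (by linarith)) (by linarith)
  · refine ⟨0, h0mem, D / 2, hhmem, ?_, ?_⟩
    · rw [hZ0]
      apply div_pos (mul_pos hcpos (by linarith)) (by linarith)
    · rw [hZh]
      exact div_neg_of_neg_of_pos (mul_neg_of_pos_of_neg hcpos (by linarith)) (by linarith)
end
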